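/- Let A(e, M) := (Re ⊗ MRe)/|MRe|² + (Rᵀe ⊗ MRᵀe)/|MRᵀe|² − M⁻¹ for M ∈ GL₂(ℝ) and e a unit vector, R rotation by π/3. Then the directional derivative of M ↦ Φ(e, M) at M in direction N satisfies dΦ(e,M)[N] = ((Φ(e,M)² + 1)/Φ(e,M))·trace(A(e,M)N), where Φ(e,M) = sqrt(|MRe|²|MRᵀe|²/((3/4)(det M)²) − 1), assuming Φ(e,M) > 0. -/

import Mathlib

set_option maxHeartbeats 2000000


open Matrix

noncomputable section

/-- The rotation matrix of angle `π/3`. -/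
def R : Matrix (Fin 2) (Fin 2) ℝ :=
  !![1 / 2, -(Real.sqrt 3) / 2; Real.sqrt 3 / 2, 1 / 2]

/-- The squared Euclidean norm of a vector in `ℝ²`. -/
def sqnorm (v : Fin 2 → ℝ) : ℝ := v 0 ^ 2 + v 1 ^ 2

/-- `Φ(e, M) = sqrt(|MRe|²·|MRᵀe|² / ((3/4)·(det M)²) − 1)`. -/
def Phi (e : Fin 2 → ℝ) (M : Matrix (Fin 2) (Fin 2) ℝ) : ℝ :=
  Real.sqrt (sqnorm (M.mulVec (R.mulVec e)) * sqnorm (M.mulVec (Rᵀ.mulVec e)) /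
    ((3 / 4) * M.det ^ 2) - 1)

/-- The tensor field
`A(e, M) = (Re ⊗ MRe)/|MRe|² + (Rᵀe ⊗ MRᵀe)/|MRᵀe|² − M⁻¹`. -/
def Amat (e : Fin 2 → ℝ) (M : Matrix (Fin 2) (Fin 2) ℝ) : Matrix (Fin 2) (Fin 2) ℝ :=
  (sqnorm (M.mulVec (R.mulVec e)))⁻¹ • vecMulVec (R.mulVec e) (M.mulVec (R.mulVec e))
    + (sqnorm (M.mulVec (Rᵀ.mulVec e)))⁻¹ •
        vecMulVec (Rᵀ.mulVec e) (M.mulVec (Rᵀ.mulVec e))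
    - M⁻¹

private lemma quadDeriv (p q r s : ℝ) :
    HasDerivAt (fun τ : ℝ => (p + τ * q) ^ 2 + (r + τ * s) ^ 2) (2 * (p * q + r * s)) 0 := by
  have h1 : HasDerivAt (fun τ : ℝ => p + τ * q) q 0 := by
    simpa using ((hasDerivAt_id (0 : ℝ)).mul_const q).const_add p
  have h2 : HasDerivAt (fun τ : ℝ => r + τ * s) s 0 := by
    simpa using ((hasDerivAt_id (0 : ℝ)).mul_const s).const_add r
  have h := (h1.pow 2).add (h2.pow 2)
  refine h.congr_deriv ?_
  push_cast
  ring

private lemma prodDeriv (p q r s p' q' r' s' : ℝ) :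
    HasDerivAt (fun τ : ℝ => (p + τ * p') * (s + τ * s') - (q + τ * q') * (r + τ * r'))
      (p * s' + p' * s - (q * r' + q' * r)) 0 := by
  have h1 : HasDerivAt (fun τ : ℝ => p + τ * p') p' 0 := by
    simpa using ((hasDerivAt_id (0 : ℝ)).mul_const p').const_add p
  have h2 : HasDerivAt (fun τ : ℝ => s + τ * s') s' 0 := by
    simpa using ((hasDerivAt_id (0 : ℝ)).mul_const s').const_add s
  have h3 : HasDerivAt (fun τ : ℝ => q + τ * q') q' 0 := by
    simpa using ((hasDerivAt_id (0 : ℝ)).mul_const q').const_add q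
  have h4 : HasDerivAt (fun τ : ℝ => r + τ * r') r' 0 := by
    simpa using ((hasDerivAt_id (0 : ℝ)).mul_const r').const_add r
  have h := (h1.mul h2).sub (h3.mul h4)
  refine h.congr_deriv ?_
  ring

/-- The directional derivative of `M ↦ Φ(e, M)` at `M` in the direction `N` equals
`((Φ(e,M)² + 1)/Φ(e,M))·trace(A(e,M)·N)`, provided the radicand defining `Φ(e,M)` is
strictly positive (so that `Φ(e,M) > 0` and `Φ(e,·)` is differentiable at `M`). -/
theorem hasDerivAt_Phi (e : Fin 2 → ℝ) (he : sqnorm e = 1)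
    (M N : Matrix (Fin 2) (Fin 2) ℝ) (hdet : M.det ≠ 0)
    (hpos : 0 < sqnorm (M.mulVec (R.mulVec e)) * sqnorm (M.mulVec (Rᵀ.mulVec e)) /
      ((3 / 4) * M.det ^ 2) - 1) :
    HasDerivAt (fun τ : ℝ => Phi e (M + τ • N))
      (((Phi e M) ^ 2 + 1) / Phi e M * (Amat e M * N).trace) 0 := by
  set u : Fin 2 → ℝ := R.mulVec e with hu
  set w : Fin 2 → ℝ := Rᵀ.mulVec e with hw
  have hmv : ∀ (v : Fin 2 → ℝ) (τ : ℝ) (i : Fin 2),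
      ((M + τ • N).mulVec v) i = (M.mulVec v) i + τ * (N.mulVec v) i := by
    intro v τ i
    simp [Matrix.add_mulVec, Matrix.smul_mulVec]
    fin_cases i <;> simp
  -- derivative of the numerator factors
  have hP : HasDerivAt (fun τ : ℝ => sqnorm ((M + τ • N).mulVec u))
      (2 * ((M.mulVec u) 0 * (N.mulVec u) 0 + (M.mulVec u) 1 * (N.mulVec u) 1)) 0 := by
    have hfn : (fun τ : ℝ => sqnorm ((M + τ • N).mulVec u)) =
        fun τ : ℝ => ((M.mulVec u) 0 + τ * (N.mulVec u) 0) ^ 2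
          + ((M.mulVec u) 1 + τ * (N.mulVec u) 1) ^ 2 := by
      funext τ; simp [sqnorm, hmv]
    rw [hfn]; exact quadDeriv _ _ _ _
  have hQ : HasDerivAt (fun τ : ℝ => sqnorm ((M + τ • N).mulVec w))
      (2 * ((M.mulVec w) 0 * (N.mulVec w) 0 + (M.mulVec w) 1 * (N.mulVec w) 1)) 0 := by
    have hfn : (fun τ : ℝ => sqnorm ((M + τ • N).mulVec w)) =
        fun τ : ℝ => ((M.mulVec w) 0 + τ * (N.mulVec w) 0) ^ 2
          + ((M.mulVec w) 1 + τ * (N.mulVec w) 1) ^ 2 := by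
      funext τ; simp [sqnorm, hmv]
    rw [hfn]; exact quadDeriv _ _ _ _
  -- derivative of det
  have hD : HasDerivAt (fun τ : ℝ => (M + τ • N).det)
      (M 0 0 * N 1 1 + N 0 0 * M 1 1 - (M 0 1 * N 1 0 + N 0 1 * M 1 0)) 0 := by
    have hfn : (fun τ : ℝ => (M + τ • N).det) =
        fun τ : ℝ => (M 0 0 + τ * N 0 0) * (M 1 1 + τ * N 1 1)
          - (M 0 1 + τ * N 0 1) * (M 1 0 + τ * N 1 0) := by
      funext τ; simp [Matrix.det_fin_two, Matrix.add_apply, Matrix.smul_apply, smul_eq_mul]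
    rw [hfn]; exact prodDeriv _ _ _ _ _ _ _ _
  have hDen := (hD.pow 2).const_mul ((3:ℝ)/4)
  simp only [zero_smul, add_zero, Nat.cast_ofNat, pow_one] at hDen
  have hden0 : (3/4 : ℝ) * (M + (0:ℝ) • N).det ^ 2 ≠ 0 := by
    simp only [zero_smul, add_zero]
    positivity
  have hNum := hP.mul hQ
  have hf := ((hNum.div hDen hden0).sub_const 1)
  simp only [zero_smul, add_zero] at hf
  have hf0pos : (0:ℝ) < sqnorm (M.mulVec u) * sqnorm (M.mulVec w) / ((3/4) * M.det ^ 2) - 1 :=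
    hpos
  have hf0 : sqnorm (M.mulVec u) * sqnorm (M.mulVec w) / ((3/4) * M.det ^ 2) - 1 ≠ 0 :=
    ne_of_gt hf0pos
  -- now identify the goal function and value
  have hf0' : sqnorm ((M + (0:ℝ) • N).mulVec u) * sqnorm ((M + (0:ℝ) • N).mulVec w) /
      (3 / 4 * (M + (0:ℝ) • N).det ^ 2) - 1 ≠ 0 := by
    simp only [zero_smul, add_zero]; exact hf0
  have hsq := hf.sqrt hf0'
  simp only [zero_smul, add_zero, Pi.mul_apply, Pi.div_apply, Pi.pow_apply] at hsq
  -- nonzeroness of the squared norms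
  have h34 : (0:ℝ) < 3 / 4 * M.det ^ 2 := by positivity
  have hX : 3 / 4 * M.det ^ 2 < sqnorm (M.mulVec u) * sqnorm (M.mulVec w) := by
    have h1 : 1 < sqnorm (M.mulVec u) * sqnorm (M.mulVec w) / (3 / 4 * M.det ^ 2) := by
      linarith
    exact (one_lt_div h34).mp h1
  have hsu0 : 0 ≤ sqnorm (M.mulVec u) := by simp only [sqnorm]; positivity
  have hsw0 : 0 ≤ sqnorm (M.mulVec w) := by simp only [sqnorm]; positivity
  have hsu : sqnorm (M.mulVec u) ≠ 0 := by nlinarith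
  have hsw : sqnorm (M.mulVec w) ≠ 0 := by nlinarith
  have hs : Real.sqrt (sqnorm (M.mulVec u) * sqnorm (M.mulVec w) / (3 / 4 * M.det ^ 2) - 1)
      ≠ 0 := (Real.sqrt_pos.mpr hf0pos).ne'
  -- trace computations
  have t1 : ∀ v : Fin 2 → ℝ, ((vecMulVec v (M.mulVec v)) * N).trace
      = (M.mulVec v) 0 * (N.mulVec v) 0 + (M.mulVec v) 1 * (N.mulVec v) 1 := by
    intro v
    simp only [Matrix.trace_fin_two, Matrix.mul_apply, Fin.sum_univ_two,
      Matrix.vecMulVec_apply, Matrix.mulVec, dotProduct, Fin.sum_univ_two]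
    ring
  have t3 : (M⁻¹ * N).trace
      = (M 0 0 * N 1 1 + N 0 0 * M 1 1 - (M 0 1 * N 1 0 + N 0 1 * M 1 0)) / M.det := by
    simp only [Matrix.inv_def, Ring.inverse_eq_inv', Matrix.adjugate_fin_two,
      Matrix.trace_fin_two, Matrix.mul_apply, Fin.sum_univ_two, Matrix.smul_apply,
      smul_eq_mul, Matrix.cons_val', Matrix.cons_val_zero, Matrix.cons_val_one,
      Matrix.head_cons, Matrix.empty_val', Matrix.cons_val_fin_one, Matrix.head_fin_const,
      Matrix.of_apply]
    field_simp
    ring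
  have tA : (Amat e M * N).trace
      = (sqnorm (M.mulVec u))⁻¹ *
          ((M.mulVec u) 0 * (N.mulVec u) 0 + (M.mulVec u) 1 * (N.mulVec u) 1)
        + (sqnorm (M.mulVec w))⁻¹ *
          ((M.mulVec w) 0 * (N.mulVec w) 0 + (M.mulVec w) 1 * (N.mulVec w) 1)
        - (M 0 0 * N 1 1 + N 0 0 * M 1 1 - (M 0 1 * N 1 0 + N 0 1 * M 1 0)) / M.det := by
    simp only [Amat, Matrix.sub_mul, Matrix.add_mul, Matrix.smul_mul, Matrix.trace_sub,
      Matrix.trace_add, Matrix.trace_smul, smul_eq_mul, t1, t3]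
    rfl
  simp only [Phi]
  convert hsq using 1
  rw [Real.sq_sqrt hf0pos.le, tA]
  set s : ℝ := Real.sqrt (sqnorm (M.mulVec u) * sqnorm (M.mulVec w) / (3 / 4 * M.det ^ 2) - 1)
    with hsdef
  field_simp
  ring

end
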